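/- Let S and A be finite nonempty sets, f : S × A → ℝ, λ(s'|s,a) ≥ 0 for s' ≠ s with total rate Λ(s,a) := ∑_{s'≠s} λ(s'|s,a), and γ > 0. Let V₀ : S → ℝ be the unique solution of the continuous-time optimality equation, and for each Δ > 0 with Δ·Λ(s,a) ≤ 1 for all (s,a), let V_Δ : S → ℝ be the unique solution of the discrete-time Bellman equation with increment Δ. Then ‖V_Δ − V₀‖ → 0 as Δ → 0⁺, where ‖V‖ := max_{s∈S} |V(s)|. -/

import Mathlib

lemma aux_abs_sup'_sub {α : Type*} (t : Finset α) (ht : t.Nonempty)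
    (F G : α → ℝ) (c : ℝ) (h : ∀ a ∈ t, |F a - G a| ≤ c) :
    |t.sup' ht F - t.sup' ht G| ≤ c := by
  have key : ∀ (F G : α → ℝ), (∀ a ∈ t, F a - G a ≤ c) →
      t.sup' ht F - t.sup' ht G ≤ c := by
    intro F G h
    rw [sub_le_iff_le_add]
    refine Finset.sup'_le _ _ (fun a ha => ?_)
    have := h a ha
    have := Finset.le_sup' G ha
    linarith
  have h1 := key F G (fun a ha => (abs_le.1 (h a ha)).2)
  have h2 := key G F (fun a ha => by have := (abs_le.1 (h a ha)).1; linarith)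
  rw [abs_le]; constructor <;> linarith

lemma aux_sup'_affine {α : Type*} (t : Finset α) (ht : t.Nonempty)
    (c Δ : ℝ) (hΔ : 0 ≤ Δ) (g : α → ℝ) :
    t.sup' ht (fun a => c + Δ * g a) = c + Δ * t.sup' ht g := by
  have hmono : Monotone (fun x : ℝ => c + Δ * x) := fun x y hxy => by
    dsimp; nlinarith
  exact (Finset.comp_sup'_eq_sup'_comp ht (fun x : ℝ => c + Δ * x)
    (fun x y => by exact hmono.map_max)).symm

lemma aux_final (N E H B Δ x u e₁ : ℝ) (hN0 : 0 ≤ N) (hB0 : 0 ≤ B)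
    (hΔ : 0 < Δ) (hx : 0 < x)
    (hprod : E * u = 1) (hu1 : x + 1 ≤ u) (hupos : 0 < u) (hue : u ≤ e₁)
    (hE1 : E < 1) (hE0 : 0 < E)
    (hNle : N ≤ E * N + ((1 - E) * (Δ * H) + (x - (1 - E)) * B)) :
    N ≤ Δ * H + x * e₁ * B := by
  have h1E : 0 < 1 - E := by linarith
  have step2 : N * (1 - E) ≤ (1 - E) * (Δ * H) + (x - (1 - E)) * B := by
    nlinarith
  have step3 : x - (1 - E) ≤ (1 - E) * (x * u) := by
    nlinarith [sq_nonneg (u - 1), mul_pos hx hupos,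
      mul_nonneg hx.le (sq_nonneg (u - 1))]
  have step4 : N ≤ Δ * H + x * u * B := by
    nlinarith [mul_le_mul_of_nonneg_right step3 hB0]
  have h5 : x * u * B ≤ x * e₁ * B :=
    mul_le_mul_of_nonneg_right (mul_le_mul_of_nonneg_left hue hx.le) hB0
  linarith

theorem discretized_value_function_converges
    {S A : Type*} [Fintype S] [Nonempty S] [DecidableEq S]
    [Fintype A] [Nonempty A]
    (f : S → A → ℝ) (lam : S → S → A → ℝ)
    (hlam : ∀ s' s a, s' ≠ s → 0 ≤ lam s' s a)
    (γ : ℝ) (hγ : 0 < γ)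
    (V₀ : S → ℝ)
    (hV₀ : ∀ s : S, γ * V₀ s =
      Finset.univ.sup' Finset.univ_nonempty (fun a : A =>
        f s a + (∑ s' ∈ Finset.univ.erase s, lam s' s a * V₀ s')
          - (∑ s' ∈ Finset.univ.erase s, lam s' s a) * V₀ s))
    (VΔ : ℝ → S → ℝ)
    (hVΔ : ∀ Δ : ℝ, 0 < Δ →
      (∀ s a, Δ * (∑ s' ∈ Finset.univ.erase s, lam s' s a) ≤ 1) →
      ∀ s : S, VΔ Δ s =
        Finset.univ.sup' Finset.univ_nonempty (fun a : A =>
          Δ * f s a + Real.exp (-(γ * Δ)) *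
            ((1 - Δ * ∑ s' ∈ Finset.univ.erase s, lam s' s a) * VΔ Δ s +
              ∑ s' ∈ Finset.univ.erase s, Δ * lam s' s a * VΔ Δ s'))) :
    Filter.Tendsto
      (fun Δ : ℝ =>
        Finset.univ.sup' Finset.univ_nonempty (fun s : S => |VΔ Δ s - V₀ s|))
      (nhdsWithin 0 (Set.Ioi 0)) (nhds 0) := by
  classical
  obtain ⟨s₀⟩ := (inferInstance : Nonempty S)
  obtain ⟨a₀⟩ := (inferInstance : Nonempty A)
  have hΛ0 : ∀ (s : S) (a : A), 0 ≤ ∑ s' ∈ Finset.univ.erase s, lam s' s a :=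
    fun s a => Finset.sum_nonneg fun s' hs' =>
      hlam s' s a (Finset.ne_of_mem_erase hs')
  set B : ℝ := Finset.univ.sup' Finset.univ_nonempty (fun s => |V₀ s|) with hBdef
  have hB : ∀ s : S, |V₀ s| ≤ B := fun s => by
    rw [hBdef]
    exact Finset.le_sup' (fun s => |V₀ s|) (Finset.mem_univ s)
  have hB0 : 0 ≤ B := le_trans (abs_nonneg _) (hB s₀)
  set H : ℝ := Finset.univ.sup' Finset.univ_nonempty
    (fun s : S => Finset.univ.sup' Finset.univ_nonempty (fun a : A =>
      |(∑ s' ∈ Finset.univ.erase s, lam s' s a * V₀ s')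
        - (∑ s' ∈ Finset.univ.erase s, lam s' s a) * V₀ s|)) with hHdef
  have hH : ∀ (s : S) (a : A),
      |(∑ s' ∈ Finset.univ.erase s, lam s' s a * V₀ s')
        - (∑ s' ∈ Finset.univ.erase s, lam s' s a) * V₀ s| ≤ H := fun s a => by
    rw [hHdef]
    refine le_trans (Finset.le_sup' (fun a : A =>
      |(∑ s' ∈ Finset.univ.erase s, lam s' s a * V₀ s')
        - (∑ s' ∈ Finset.univ.erase s, lam s' s a) * V₀ s|) (Finset.mem_univ a)) ?_
    exact Finset.le_sup' (fun s : S => Finset.univ.sup' Finset.univ_nonempty (fun a : A =>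
      |(∑ s' ∈ Finset.univ.erase s, lam s' s a * V₀ s')
        - (∑ s' ∈ Finset.univ.erase s, lam s' s a) * V₀ s|)) (Finset.mem_univ s)
  have hH0 : 0 ≤ H := le_trans (abs_nonneg _) (hH s₀ a₀)
  set M : ℝ := Finset.univ.sup' Finset.univ_nonempty
    (fun s : S => Finset.univ.sup' Finset.univ_nonempty (fun a : A =>
      ∑ s' ∈ Finset.univ.erase s, lam s' s a)) with hMdef
  have hM : ∀ (s : S) (a : A), (∑ s' ∈ Finset.univ.erase s, lam s' s a) ≤ M :=
    fun s a => by
      rw [hMdef]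
      refine le_trans (Finset.le_sup' (fun a : A =>
        ∑ s' ∈ Finset.univ.erase s, lam s' s a) (Finset.mem_univ a)) ?_
      exact Finset.le_sup' (fun s : S => Finset.univ.sup' Finset.univ_nonempty
        (fun a : A => ∑ s' ∈ Finset.univ.erase s, lam s' s a)) (Finset.mem_univ s)
  have hM1 : 0 < M + 1 := by
    have := hΛ0 s₀ a₀; have := hM s₀ a₀; linarith
  set δ₀ : ℝ := min (M + 1)⁻¹ γ⁻¹ with hδdef
  have hδ₀pos : 0 < δ₀ := lt_min (by positivity) (by positivity)
  set C : ℝ := H + γ * Real.exp 1 * B with hCdef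
  clear_value B H M C
  -- Key quantitative bound
  have key : ∀ Δ : ℝ, 0 < Δ → Δ ≤ δ₀ →
      Finset.univ.sup' Finset.univ_nonempty (fun s : S => |VΔ Δ s - V₀ s|)
        ≤ C * Δ := by
    intro Δ hΔpos hΔle
    have hΔM : ∀ (s : S) (a : A),
        Δ * (∑ s' ∈ Finset.univ.erase s, lam s' s a) ≤ 1 := by
      intro s a
      have h1 : Δ ≤ (M + 1)⁻¹ := le_trans hΔle (min_le_left _ _)
      have h2 := hΛ0 s a
      have h3 := hM s a
      have h4 : (M + 1)⁻¹ * (M + 1) = 1 := by field_simp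
      nlinarith [inv_nonneg.2 hM1.le]
    have hΔγ : γ * Δ ≤ 1 := by
      have h1 : Δ ≤ γ⁻¹ := le_trans hΔle (min_le_right _ _)
      have h4 : γ * γ⁻¹ = 1 := by field_simp
      nlinarith
    have hbell := hVΔ Δ hΔpos hΔM
    set W : S → ℝ := VΔ Δ with hWdef
    set N : ℝ := Finset.univ.sup' Finset.univ_nonempty
      (fun s : S => |W s - V₀ s|) with hNdef
    have hN : ∀ s : S, |W s - V₀ s| ≤ N := fun s => by
      rw [hNdef]
      exact Finset.le_sup' (fun s : S => |W s - V₀ s|) (Finset.mem_univ s)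
    have hN0 : 0 ≤ N := le_trans (abs_nonneg _) (hN s₀)
    set E : ℝ := Real.exp (-(γ * Δ)) with hEdef
    clear_value W N
    have hE0 : 0 < E := Real.exp_pos _
    have hx : 0 < γ * Δ := mul_pos hγ hΔpos
    have hprod : E * Real.exp (γ * Δ) = 1 := by
      rw [hEdef, ← Real.exp_add]; simp
    have hu1 : γ * Δ + 1 ≤ Real.exp (γ * Δ) := Real.add_one_le_exp _
    have hupos : 0 < Real.exp (γ * Δ) := Real.exp_pos _
    have hE1 : E < 1 := by nlinarith
    have hq1 : 1 - E ≤ γ * Δ := by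
      have := Real.add_one_le_exp (-(γ * Δ)); rw [← hEdef] at this; linarith
    -- per-state bound
    have step : ∀ s : S, |W s - V₀ s| ≤
        E * N + ((1 - E) * (Δ * H) + (γ * Δ - (1 - E)) * B) := by
      intro s
      set G₂ : A → ℝ := fun a => (1 - γ * Δ) * V₀ s +
        Δ * (f s a + (∑ s' ∈ Finset.univ.erase s, lam s' s a * V₀ s')
          - (∑ s' ∈ Finset.univ.erase s, lam s' s a) * V₀ s) with hG₂def
      have hG₂sup : Finset.univ.sup' Finset.univ_nonempty G₂ = V₀ s := by
        have h := aux_sup'_affine (Finset.univ : Finset A) Finset.univ_nonempty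
          ((1 - γ * Δ) * V₀ s) Δ hΔpos.le
          (fun a => f s a + (∑ s' ∈ Finset.univ.erase s, lam s' s a * V₀ s')
            - (∑ s' ∈ Finset.univ.erase s, lam s' s a) * V₀ s)
        rw [← hV₀ s] at h
        rw [hG₂def]
        refine Eq.trans ?_ (by ring :
          (1 - γ * Δ) * V₀ s + Δ * (γ * V₀ s) = V₀ s)
        exact h
      have hper : ∀ a ∈ (Finset.univ : Finset A), |(Δ * f s a + E *
            ((1 - Δ * ∑ s' ∈ Finset.univ.erase s, lam s' s a) * W s +
              ∑ s' ∈ Finset.univ.erase s, Δ * lam s' s a * W s')) - G₂ a| ≤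
          E * N + ((1 - E) * (Δ * H) + (γ * Δ - (1 - E)) * B) := by
        intro a _
        set L : ℝ := ∑ s' ∈ Finset.univ.erase s, lam s' s a with hLdef
        set S1 : ℝ := ∑ s' ∈ Finset.univ.erase s, lam s' s a * W s' with hS1def
        set S2 : ℝ := ∑ s' ∈ Finset.univ.erase s, lam s' s a * V₀ s' with hS2def
        have e1 : (∑ s' ∈ Finset.univ.erase s, Δ * lam s' s a * W s')
            = Δ * S1 := by
          rw [hS1def, Finset.mul_sum]
          exact Finset.sum_congr rfl fun _ _ => by ring
        have hSd : |S1 - S2| ≤ L * N := by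
          have e2 : S1 - S2 = ∑ s' ∈ Finset.univ.erase s,
              lam s' s a * (W s' - V₀ s') := by
            rw [hS1def, hS2def, ← Finset.sum_sub_distrib]
            exact Finset.sum_congr rfl fun _ _ => by ring
          rw [e2]
          calc |∑ s' ∈ Finset.univ.erase s, lam s' s a * (W s' - V₀ s')|
              ≤ ∑ s' ∈ Finset.univ.erase s, |lam s' s a * (W s' - V₀ s')| :=
                Finset.abs_sum_le_sum_abs _ _
            _ ≤ ∑ s' ∈ Finset.univ.erase s, lam s' s a * N := by
                refine Finset.sum_le_sum fun s' hs' => ?_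
                have hl := hlam s' s a (Finset.ne_of_mem_erase hs')
                rw [abs_mul, abs_of_nonneg hl]
                exact mul_le_mul_of_nonneg_left (hN s') hl
            _ = L * N := by rw [hLdef, Finset.sum_mul]
        have hL0 : 0 ≤ L := hΛ0 s a
        have hΔL : Δ * L ≤ 1 := hΔM s a
        have hrw : (Δ * f s a + E * ((1 - Δ * L) * W s +
              ∑ s' ∈ Finset.univ.erase s, Δ * lam s' s a * W s')) - G₂ a =
            E * ((1 - Δ * L) * (W s - V₀ s) + Δ * (S1 - S2))
            + ((E - 1) * (Δ * (S2 - L * V₀ s)) + (E - 1 + γ * Δ) * V₀ s) := by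
          rw [e1, hG₂def]
          ring
        rw [hrw]
        have t1 : |E * ((1 - Δ * L) * (W s - V₀ s) + Δ * (S1 - S2))|
            ≤ E * N := by
          rw [abs_mul, abs_of_pos hE0]
          have h1 : |(1 - Δ * L) * (W s - V₀ s) + Δ * (S1 - S2)| ≤
              (1 - Δ * L) * N + Δ * (L * N) := by
            calc |(1 - Δ * L) * (W s - V₀ s) + Δ * (S1 - S2)|
                ≤ |(1 - Δ * L) * (W s - V₀ s)| + |Δ * (S1 - S2)| := abs_add_le _ _
              _ ≤ (1 - Δ * L) * N + Δ * (L * N) := by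
                  rw [abs_mul, abs_mul,
                    abs_of_nonneg (by linarith : (0:ℝ) ≤ 1 - Δ * L),
                    abs_of_pos hΔpos]
                  exact add_le_add
                    (mul_le_mul_of_nonneg_left (hN s) (by linarith))
                    (mul_le_mul_of_nonneg_left hSd hΔpos.le)
          calc E * |(1 - Δ * L) * (W s - V₀ s) + Δ * (S1 - S2)|
              ≤ E * ((1 - Δ * L) * N + Δ * (L * N)) :=
                mul_le_mul_of_nonneg_left h1 hE0.le
            _ = E * N := by ring
        have t2 : |(E - 1) * (Δ * (S2 - L * V₀ s)) + (E - 1 + γ * Δ) * V₀ s| ≤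
            (1 - E) * (Δ * H) + (γ * Δ - (1 - E)) * B := by
          have hhsa : |S2 - L * V₀ s| ≤ H := hH s a
          calc |(E - 1) * (Δ * (S2 - L * V₀ s)) + (E - 1 + γ * Δ) * V₀ s|
              ≤ |(E - 1) * (Δ * (S2 - L * V₀ s))| + |(E - 1 + γ * Δ) * V₀ s| :=
                abs_add_le _ _
            _ ≤ (1 - E) * (Δ * H) + (γ * Δ - (1 - E)) * B := by
                rw [abs_mul, abs_mul, abs_mul,
                  abs_of_nonpos (by linarith : E - 1 ≤ (0:ℝ)),
                  abs_of_nonneg (by linarith : (0:ℝ) ≤ E - 1 + γ * Δ),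
                  abs_of_pos hΔpos]
                have b1 : Δ * |S2 - L * V₀ s| ≤ Δ * H :=
                  mul_le_mul_of_nonneg_left hhsa hΔpos.le
                have b2 : (E - 1 + γ * Δ) * |V₀ s| ≤ (E - 1 + γ * Δ) * B :=
                  mul_le_mul_of_nonneg_left (hB s) (by linarith)
                nlinarith [abs_nonneg (S2 - L * V₀ s), abs_nonneg (V₀ s)]
        calc |E * ((1 - Δ * L) * (W s - V₀ s) + Δ * (S1 - S2))
              + ((E - 1) * (Δ * (S2 - L * V₀ s)) + (E - 1 + γ * Δ) * V₀ s)|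
            ≤ |E * ((1 - Δ * L) * (W s - V₀ s) + Δ * (S1 - S2))|
              + |(E - 1) * (Δ * (S2 - L * V₀ s)) + (E - 1 + γ * Δ) * V₀ s| :=
              abs_add_le _ _
          _ ≤ E * N + ((1 - E) * (Δ * H) + (γ * Δ - (1 - E)) * B) :=
              add_le_add t1 t2
      have h := aux_abs_sup'_sub (Finset.univ : Finset A) Finset.univ_nonempty
        (fun a => Δ * f s a + E *
            ((1 - Δ * ∑ s' ∈ Finset.univ.erase s, lam s' s a) * W s +
              ∑ s' ∈ Finset.univ.erase s, Δ * lam s' s a * W s')) G₂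
        (E * N + ((1 - E) * (Δ * H) + (γ * Δ - (1 - E)) * B)) hper
      rw [hG₂sup] at h
      have heq : |W s - V₀ s| = |Finset.univ.sup' Finset.univ_nonempty
          (fun a => Δ * f s a + E *
            ((1 - Δ * ∑ s' ∈ Finset.univ.erase s, lam s' s a) * W s +
              ∑ s' ∈ Finset.univ.erase s, Δ * lam s' s a * W s')) - V₀ s| := by
        conv_lhs => rw [hbell s]
      rw [heq]
      exact h
    -- combine
    have hNle : N ≤ E * N + ((1 - E) * (Δ * H) + (γ * Δ - (1 - E)) * B) := by
      conv_lhs => rw [hNdef]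
      exact Finset.sup'_le _ _ (fun s _ => step s)
    clear_value E
    have hue : Real.exp (γ * Δ) ≤ Real.exp 1 := Real.exp_le_exp.2 hΔγ
    have hfin := aux_final N E H B Δ (γ * Δ) (Real.exp (γ * Δ)) (Real.exp 1)
      hN0 hB0 hΔpos hx hprod hu1 hupos hue hE1 hE0 hNle
    calc N ≤ Δ * H + (γ * Δ) * Real.exp 1 * B := hfin
      _ = C * Δ := by rw [hCdef]; ring
  -- filter argument
  have hnonneg : ∀ᶠ Δ in nhdsWithin (0:ℝ) (Set.Ioi 0),
      0 ≤ Finset.univ.sup' Finset.univ_nonempty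
        (fun s : S => |VΔ Δ s - V₀ s|) :=
    Filter.Eventually.of_forall (fun Δ => le_trans (abs_nonneg _)
      (Finset.le_sup' (fun s : S => |VΔ Δ s - V₀ s|) (Finset.mem_univ s₀)))
  have hbound : ∀ᶠ Δ in nhdsWithin (0:ℝ) (Set.Ioi 0),
      Finset.univ.sup' Finset.univ_nonempty
        (fun s : S => |VΔ Δ s - V₀ s|) ≤ C * Δ := by
    have h1 : ∀ᶠ Δ in nhdsWithin (0:ℝ) (Set.Ioi 0), Δ ∈ Set.Ioi (0:ℝ) :=
      eventually_mem_nhdsWithin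
    have h2 : ∀ᶠ Δ in nhdsWithin (0:ℝ) (Set.Ioi 0), Δ < δ₀ :=
      Filter.Eventually.filter_mono nhdsWithin_le_nhds (eventually_lt_nhds hδ₀pos)
    filter_upwards [h1, h2] with Δ hΔ1 hΔ2
    exact key Δ hΔ1 hΔ2.le
  have hC : Filter.Tendsto (fun Δ : ℝ => C * Δ)
      (nhdsWithin (0:ℝ) (Set.Ioi 0)) (nhds 0) := by
    have h : Filter.Tendsto (fun Δ : ℝ => C * Δ) (nhds (0:ℝ)) (nhds (C * 0)) :=
      Filter.Tendsto.const_mul C Filter.tendsto_id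
    rw [mul_zero] at h
    exact h.mono_left nhdsWithin_le_nhds
  exact squeeze_zero' hnonneg hbound hC
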